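/- In the stone game on the 4-by-4 board, there is no sequence consisting of a nonzero number of legal moves that starts from the empty board and ends with the empty board. -/

import Mathlib

/-- A single legal move in the stone game on the `n`-by-`n` board.  The state
is the finite set of cells (column, row) currently containing stones.  Either
place stones on an empty L-shaped tromino `(i, j), (i+1, j), (i, j+1)`
(rotations not allowed), or clear a full column or a full row. -/
def StoneMove (n : ℕ) (s t : Finset (Fin n × Fin n)) : Prop :=
  (∃ (i j : Fin n) (hi : (i : ℕ) + 1 < n) (hj : (j : ℕ) + 1 < n),
      (i, j) ∉ s ∧ (⟨(i : ℕ) + 1, hi⟩, j) ∉ s ∧ (i, ⟨(j : ℕ) + 1, hj⟩) ∉ s ∧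
      t = s ∪ {(i, j), (⟨(i : ℕ) + 1, hi⟩, j), (i, ⟨(j : ℕ) + 1, hj⟩)}) ∨
  (∃ i : Fin n, (∀ j : Fin n, (i, j) ∈ s) ∧
      t = s.filter (fun p => p.1 ≠ i)) ∨
  (∃ j : Fin n, (∀ i : Fin n, (i, j) ∈ s) ∧
      t = s.filter (fun p => p.2 ≠ j))

/-- Weight of a cell: every L-tromino sum is `5`, every full row/column sum
is `-5`, so the total weight of the stones on the board strictly increases
with each move. -/
def stoneWt : Fin 4 × Fin 4 → ℤ := fun p =>
  ![![-31, 18, -24, 32], ![18, 11, -3, -31],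
    ![-24, -3, 39, -17], ![32, -31, -17, 11]] p.1 p.2

/-- Total weight of a position. -/
def stonePhi (s : Finset (Fin 4 × Fin 4)) : ℤ := s.sum stoneWt

lemma stone_tromino_sum : ∀ i j : Fin 4, (i : ℕ) + 1 < 4 → (j : ℕ) + 1 < 4 →
    (({(i, j), (i + 1, j), (i, j + 1)} : Finset (Fin 4 × Fin 4))).sum stoneWt = 5 := by
  decide

lemma stone_col_sum : ∀ i : Fin 4,
    (({i} ×ˢ (Finset.univ : Finset (Fin 4))).sum stoneWt) = -5 := by decide

lemma stone_row_sum : ∀ j : Fin 4,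
    (((Finset.univ : Finset (Fin 4)) ×ˢ {j}).sum stoneWt) = -5 := by decide

lemma stoneMove_phi_lt {s t : Finset (Fin 4 × Fin 4)} (h : StoneMove 4 s t) :
    stonePhi s < stonePhi t := by
  rcases h with ⟨i, j, hi, hj, ha, hb, hc, rfl⟩ | ⟨i, hall, rfl⟩ | ⟨j, hall, rfl⟩
  · -- tromino placement
    have e1 : (⟨(i : ℕ) + 1, hi⟩ : Fin 4) = i + 1 := by
      rw [Fin.ext_iff, Fin.add_def]
      simp only [Fin.val_one]
      omega
    have e2 : (⟨(j : ℕ) + 1, hj⟩ : Fin 4) = j + 1 := by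
      rw [Fin.ext_iff, Fin.add_def]
      simp only [Fin.val_one]
      omega
    rw [e1] at hb ⊢
    rw [e2] at hc ⊢
    have hd : Disjoint s ({(i, j), (i + 1, j), (i, j + 1)} : Finset (Fin 4 × Fin 4)) := by
      rw [Finset.disjoint_right]
      intro p hp
      simp only [Finset.mem_insert, Finset.mem_singleton] at hp
      rcases hp with rfl | rfl | rfl <;> assumption
    have := stone_tromino_sum i j hi hj
    unfold stonePhi
    rw [Finset.sum_union hd, this]
    exact lt_add_of_pos_right _ (by norm_num)
  · -- clear a full column
    have hsplit : (s.filter (fun p => p.1 = i)).sum stoneWt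
        + (s.filter (fun p => ¬ p.1 = i)).sum stoneWt = s.sum stoneWt :=
      Finset.sum_filter_add_sum_filter_not s (fun p => p.1 = i) stoneWt
    have hcol : s.filter (fun p => p.1 = i) = {i} ×ˢ (Finset.univ : Finset (Fin 4)) := by
      ext p
      simp only [Finset.mem_filter, Finset.mem_product, Finset.mem_singleton,
        Finset.mem_univ, and_true]
      refine ⟨fun h => h.2, fun h => ⟨?_, h⟩⟩
      have := hall p.2
      rwa [← h, Prod.mk.eta] at this
    rw [hcol, stone_col_sum i] at hsplit
    unfold stonePhi
    simp only [ne_eq]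
    show s.sum stoneWt < (s.filter (fun p => ¬ p.1 = i)).sum stoneWt
    omega
  · -- clear a full row
    have hsplit : (s.filter (fun p => p.2 = j)).sum stoneWt
        + (s.filter (fun p => ¬ p.2 = j)).sum stoneWt = s.sum stoneWt :=
      Finset.sum_filter_add_sum_filter_not s (fun p => p.2 = j) stoneWt
    have hrow : s.filter (fun p => p.2 = j) = (Finset.univ : Finset (Fin 4)) ×ˢ {j} := by
      ext p
      simp only [Finset.mem_filter, Finset.mem_product, Finset.mem_singleton,
        Finset.mem_univ, true_and]
      refine ⟨fun h => h.2, fun h => ⟨?_, h⟩⟩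
      have := hall p.1
      rwa [← h, Prod.mk.eta] at this
    rw [hrow, stone_row_sum j] at hsplit
    unfold stonePhi
    simp only [ne_eq]
    show s.sum stoneWt < (s.filter (fun p => ¬ p.2 = j)).sum stoneWt
    omega

/-- The `n = 4` case of the impossibility direction of 2021 USAMO Problem 3:
on a 4-by-4 board there is no nonzero sequence of legal moves starting and
ending with the empty board. -/
theorem usamo2021_p3_four : ¬ Relation.TransGen (StoneMove 4) ∅ ∅ := by
  intro h
  have key : ∀ s t : Finset (Fin 4 × Fin 4),
      Relation.TransGen (StoneMove 4) s t → stonePhi s < stonePhi t := by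
    intro s t h
    induction h with
    | single h1 => exact stoneMove_phi_lt h1
    | tail _ h1 ih => exact ih.trans (stoneMove_phi_lt h1)
  exact absurd (key ∅ ∅ h) (lt_irrefl _)
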